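/- Fix an integer m ≥ 1 and let λ = 1/2. For a positive integer n, let A be a subset chosen uniformly at random from F_{1/2,n}, let X̄ = C(|A|, m), and let σ̄² = E[X̄²] − (E[X̄])². Then for every ε > 0 there exists n₀ such that for all n ≥ n₀: σ̄² ≤ (1 + ε) · n^{2m−1} / (2^{2m} · ((m−1)!)²). -/

import Mathlib

/-- `Fam n l` is the family `F_{λ,n}` of all subsets of `{1,…,n}` of size at most `λ·n`. -/
noncomputable def Fam (n : ℕ) (l : ℝ) : Finset (Finset (Fin n)) :=
  Finset.univ.filter (fun A => (A.card : ℝ) ≤ l * n)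

section helpers
open Finset


/-- pm-one indicator -/
noncomputable def chi {n : ℕ} (A : Finset (Fin n)) (i : Fin n) : ℝ :=
  if i ∈ A then 1 else -1

lemma chi_mul_self {n : ℕ} (A : Finset (Fin n)) (i : Fin n) : chi A i * chi A i = 1 := by
  unfold chi; split <;> norm_num

lemma sum_chi {n : ℕ} (A : Finset (Fin n)) :
    ∑ i : Fin n, chi A i = 2 * (A.card : ℝ) - n := by
  have h : ∀ i : Fin n, chi A i = 2 * (if i ∈ A then (1:ℝ) else 0) - 1 := by
    intro i; unfold chi; split <;> norm_num
  rw [Finset.sum_congr rfl (fun i _ => h i)]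
  rw [Finset.sum_sub_distrib, ← Finset.mul_sum, Finset.sum_boole]
  simp [Finset.filter_mem_eq_inter]

lemma sum_chi_cross {n : ℕ} {i j : Fin n} (hij : i ≠ j) :
    ∑ A : Finset (Fin n), chi A i * chi A j = 0 := by
  classical
  apply Finset.sum_ninvolution (fun A => if i ∈ A then A.erase i else insert i A)
  · intro A
    by_cases hi : i ∈ A <;> simp only [hi, if_true, if_false]
    · have h1 : chi (A.erase i) i = - chi A i := by
        simp [chi, hi, Finset.mem_erase]
      have h2 : chi (A.erase i) j = chi A j := by
        simp [chi, Finset.mem_erase, hij.symm]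
      rw [h1, h2]; ring
    · have h1 : chi (insert i A) i = - chi A i := by
        simp [chi, hi]
      have h2 : chi (insert i A) j = chi A j := by
        simp [chi, Finset.mem_insert, (by tauto : j = i ∨ j ∈ A ↔ j ∈ A)]
      rw [h1, h2]; ring
  · intro A _
    by_cases hi : i ∈ A <;> simp only [hi, if_true, if_false]
    · intro h; exact (h ▸ Finset.notMem_erase i A) hi
    · intro h; exact hi (h ▸ Finset.mem_insert_self i A)
  · intro A; exact Finset.mem_univ _
  · intro A
    by_cases hi : i ∈ A <;> simp [hi, Finset.notMem_erase, Finset.insert_erase,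
      Finset.erase_insert]





lemma sum_sq_card {n : ℕ} :
    ∑ A : Finset (Fin n), (2 * (A.card : ℝ) - n) ^ 2 = (n : ℝ) * 2 ^ n := by
  classical
  have h1 : ∀ A : Finset (Fin n), (2 * (A.card : ℝ) - n) ^ 2
      = ∑ i : Fin n, ∑ j : Fin n, chi A i * chi A j := by
    intro A
    rw [← Finset.sum_mul_sum, sum_chi, sq]
  rw [Finset.sum_congr rfl (fun A _ => h1 A), Finset.sum_comm]
  have h2 : ∀ i : Fin n, ∑ A : Finset (Fin n), ∑ j : Fin n, chi A i * chi A j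
      = 2 ^ n := by
    intro i
    rw [Finset.sum_comm]
    rw [Finset.sum_eq_single i]
    · rw [Finset.sum_congr rfl (fun A _ => chi_mul_self A i)]
      simp [Finset.card_univ]
    · intro j _ hj
      exact sum_chi_cross hj.symm
    · intro h; exact absurd (Finset.mem_univ i) h
  rw [Finset.sum_congr rfl (fun i _ => h2 i), Finset.sum_const, Finset.card_univ,
    Fintype.card_fin, nsmul_eq_mul]



lemma mem_Fam_iff {n : ℕ} {A : Finset (Fin n)} :
    A ∈ Fam n (1/2) ↔ 2 * A.card ≤ n := by
  simp only [Fam, Finset.mem_filter, Finset.mem_univ, true_and]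
  rw [show (1:ℝ)/2 * n = n/2 by ring, le_div_iff₀ (by norm_num : (0:ℝ) < 2)]
  constructor <;> intro h
  · exact_mod_cast (by push_cast; linarith : ((2 * A.card : ℕ) : ℝ) ≤ (n:ℝ))
  · have h2 := (Nat.cast_le (α := ℝ)).2 h
    push_cast at h2; linarith

lemma compl_mem_trick {n : ℕ} (A : Finset (Fin n)) :
    A ∈ Fam n (1/2) ∨ Aᶜ ∈ Fam n (1/2) := by
  classical
  rw [mem_Fam_iff, mem_Fam_iff, Finset.card_compl, Fintype.card_fin]
  omega

lemma card_Fam_ge {n : ℕ} : (2:ℝ) ^ n ≤ 2 * ((Fam n (1/2)).card : ℝ) := by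
  classical
  have hsub : (Finset.univ : Finset (Finset (Fin n))) ⊆
      Fam n (1/2) ∪ (Fam n (1/2)).image compl := by
    intro A _
    rcases compl_mem_trick A with h | h
    · exact Finset.mem_union_left _ h
    · refine Finset.mem_union_right _ ?_
      exact Finset.mem_image.2 ⟨Aᶜ, h, by simp⟩
  have h1 := Finset.card_le_card hsub
  have h2 := Finset.card_union_le (Fam n (1/2)) ((Fam n (1/2)).image compl)
  have h3 := Finset.card_image_le (f := compl) (s := Fam n (1/2))
  have h4 : (2:ℕ)^n ≤ 2 * (Fam n (1/2)).card := by
    have : Finset.card (Finset.univ : Finset (Finset (Fin n))) = 2^n := by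
      rw [Finset.card_univ, Fintype.card_finset, Fintype.card_fin]
    omega
  exact_mod_cast h4



lemma sum_sq_Fam {n : ℕ} :
    ∑ A ∈ Fam n (1/2), (2 * (A.card : ℝ) - n) ^ 2 ≤ (n : ℝ) * 2 ^ n / 2 := by
  classical
  set f : Finset (Fin n) → ℝ := fun A => (2 * (A.card : ℝ) - n) ^ 2 with hf
  set F := Fam n (1/2)
  set G := F.image compl with hG
  have hcomplinj : Function.Injective (compl : Finset (Fin n) → Finset (Fin n)) :=
    fun a b h => by rw [← compl_compl a, h, compl_compl]
  have hGF : ∑ A ∈ G, f A = ∑ A ∈ F, f A := by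
    rw [hG, Finset.sum_image (fun a _ b _ h => hcomplinj h)]
    apply Finset.sum_congr rfl
    intro A _
    simp only [hf, Finset.card_compl, Fintype.card_fin]
    have : A.card ≤ n := by
      simpa using Finset.card_le_card (Finset.subset_univ A)
    have hc : ((n - A.card : ℕ) : ℝ) = (n:ℝ) - A.card := by
      push_cast [this]; ring
    rw [hc]; ring
  have hinter : ∑ A ∈ F ∩ G, f A = 0 := by
    apply Finset.sum_eq_zero
    intro A hA
    rw [Finset.mem_inter] at hA
    obtain ⟨h1, h2⟩ := hA
    obtain ⟨B, hB, rfl⟩ := Finset.mem_image.1 h2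
    rw [mem_Fam_iff] at h1 hB
    rw [Finset.card_compl, Fintype.card_fin] at h1
    have hBn : B.card ≤ n := by
      simpa using Finset.card_le_card (Finset.subset_univ B)
    have : 2 * Bᶜ.card = n := by
      rw [Finset.card_compl, Fintype.card_fin]; omega
    have hz : 2 * (Bᶜ.card : ℝ) = n := by exact_mod_cast this
    simp only [hf]
    rw [show (2 * (Bᶜ.card : ℝ) - n) = 0 from by linarith]
    norm_num
  have hunion : ∑ A ∈ F ∪ G, f A ≤ (n:ℝ) * 2^n := by
    rw [← sum_sq_card (n := n)]
    apply Finset.sum_le_sum_of_subset_of_nonneg (Finset.subset_univ _)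
    intro A _ _; positivity
  have key : ∑ A ∈ F, f A + ∑ A ∈ G, f A = ∑ A ∈ F ∪ G, f A + ∑ A ∈ F ∩ G, f A :=
    (Finset.sum_union_inter).symm
  rw [hGF, hinter, add_zero] at key
  linarith


lemma choose_diff_le {m' : ℕ} : ∀ a b : ℕ, a ≤ b →
    b.choose (m' + 1) ≤ a.choose (m' + 1) + (b - a) * b.choose m' := by
  intro a b hab
  induction b, hab using Nat.le_induction with
  | base => simp
  | succ b hab ih =>
    have hpascal : (b+1).choose (m'+1) = b.choose m' + b.choose (m'+1) :=
      Nat.choose_succ_succ b m'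
    have hmono : b.choose m' ≤ (b+1).choose m' := Nat.choose_le_choose m' (by omega)
    have h1 : (b - a) * b.choose m' ≤ (b - a) * (b+1).choose m' :=
      Nat.mul_le_mul_left _ hmono
    have h2 : (b + 1 - a) = (b - a) + 1 := by omega
    calc (b+1).choose (m'+1) = b.choose m' + b.choose (m'+1) := hpascal
      _ ≤ b.choose m' + (a.choose (m'+1) + (b - a) * b.choose m') := by omega
      _ ≤ (b+1).choose m' + (a.choose (m'+1) + (b - a) * (b+1).choose m') := by omega
      _ = a.choose (m'+1) + (b + 1 - a) * (b+1).choose m' := by rw [h2]; ring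

/-- Real pointwise bound on the difference of binomials. -/
lemma choose_diff_real {m' a b : ℕ} (hab : a ≤ b) :
    (b.choose (m'+1) : ℝ) - a.choose (m'+1) ≤ ((b:ℝ) - a) * b.choose m' := by
  have h := choose_diff_le (m' := m') a b hab
  have h2 : ((b.choose (m'+1) : ℕ) : ℝ) ≤ ((a.choose (m'+1) + (b - a) * b.choose m' : ℕ) : ℝ) :=
    Nat.cast_le.2 h
  push_cast [hab] at h2
  linarith

end helpers





theorem stmt5 (m : ℕ) (hm : 1 ≤ m) (ε : ℝ) (hε : 0 < ε) :
    ∃ n₀ : ℕ, ∀ n : ℕ, n₀ ≤ n → 0 < n →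
      (∑ A ∈ Fam n (1 / 2), ((A.card.choose m : ℝ)) ^ 2) / ((Fam n (1 / 2)).card : ℝ) -
        ((∑ A ∈ Fam n (1 / 2), ((A.card.choose m : ℝ))) / ((Fam n (1 / 2)).card : ℝ)) ^ 2 ≤
      (1 + ε) * (n : ℝ) ^ (2 * m - 1) / (2 ^ (2 * m) * (((m - 1).factorial : ℝ)) ^ 2) := by
  obtain ⟨m', rfl⟩ : ∃ m', m = m' + 1 := ⟨m - 1, by omega⟩
  refine ⟨1, fun n _ hn => ?_⟩
  classical
  set F := Fam n (1/2) with hFdef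
  set k₀ := n / 2 with hk₀
  set N := ((F.card : ℕ) : ℝ) with hN
  -- F is nonempty and large
  have hFne : (∅ : Finset (Fin n)) ∈ F := by rw [hFdef, mem_Fam_iff]; simp
  have hNge : (2:ℝ)^n / 2 ≤ N := by
    have := card_Fam_ge (n := n); rw [hN]; linarith
  have hNpos : (0:ℝ) < N := by
    have : (0:ℝ) < (2:ℝ)^n / 2 := by positivity
    linarith
  -- half bounds
  have hk₀n : (k₀ : ℝ) ≤ (n:ℝ) / 2 := by
    have h1 : 2 * k₀ ≤ n := by rw [hk₀]; omega
    have h2 := (Nat.cast_le (α := ℝ)).2 h1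
    push_cast at h2; linarith
  set B : ℝ := ((n:ℝ)/2)^m' / (m'.factorial : ℝ) with hB
  have hBnonneg : 0 ≤ B := by positivity
  set c : ℝ := (k₀.choose (m'+1) : ℝ) with hc
  set X : Finset (Fin n) → ℝ := fun A => (A.card.choose (m'+1) : ℝ) with hX
  -- pointwise bound
  have hpoint : ∀ A ∈ F, (X A - c)^2 ≤ ((k₀:ℝ) - A.card)^2 * B^2 := by
    intro A hA
    have hcard : A.card ≤ k₀ := by
      rw [hFdef, mem_Fam_iff] at hA; rw [hk₀]; omega
    have hcastle : (A.card : ℝ) ≤ (k₀ : ℝ) := Nat.cast_le.2 hcard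
    have hmono : X A ≤ c := by
      show (A.card.choose (m'+1) : ℝ) ≤ (k₀.choose (m'+1) : ℝ)
      exact_mod_cast Nat.choose_le_choose (m'+1) hcard
    have hdiff : c - X A ≤ ((k₀:ℝ) - A.card) * (k₀.choose m' : ℝ) :=
      choose_diff_real hcard
    have hchooseB : (k₀.choose m' : ℝ) ≤ B := by
      calc (k₀.choose m' : ℝ) ≤ (k₀:ℝ)^m' / (m'.factorial : ℝ) := by
            exact_mod_cast Nat.choose_le_pow_div m' k₀
        _ ≤ B := by
            rw [hB]
            apply div_le_div_of_nonneg_right ?_ (by positivity)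
            · exact pow_le_pow_left₀ (by positivity) hk₀n m'
    have hdiff2 : c - X A ≤ ((k₀:ℝ) - A.card) * B := by
      calc c - X A ≤ ((k₀:ℝ) - A.card) * (k₀.choose m' : ℝ) := hdiff
        _ ≤ ((k₀:ℝ) - A.card) * B := by
            apply mul_le_mul_of_nonneg_left hchooseB (by linarith)
    have hrhs : 0 ≤ ((k₀:ℝ) - A.card) * B := mul_nonneg (by linarith) hBnonneg
    have hsq : (X A - c)^2 ≤ (((k₀:ℝ) - A.card) * B)^2 := by
      apply sq_le_sq'
      · linarith
      · linarith
    calc (X A - c)^2 ≤ (((k₀:ℝ) - A.card) * B)^2 := hsq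
      _ = ((k₀:ℝ) - A.card)^2 * B^2 := by ring
  -- quadratic sum bound
  have hquad : ∑ A ∈ F, ((k₀:ℝ) - A.card)^2 ≤ (n:ℝ) * 2^n / 8 := by
    have step1 : ∀ A ∈ F, ((k₀:ℝ) - A.card)^2 ≤ (2 * (A.card:ℝ) - n)^2 / 4 := by
      intro A hA
      have hcard : A.card ≤ k₀ := by
        rw [hFdef, mem_Fam_iff] at hA; rw [hk₀]; omega
      have hcastle : (A.card : ℝ) ≤ (k₀ : ℝ) := Nat.cast_le.2 hcard
      have h1 : (0:ℝ) ≤ (k₀:ℝ) - A.card := by linarith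
      have h2 : (k₀:ℝ) - A.card ≤ (n:ℝ)/2 - A.card := by linarith
      have h3 : ((k₀:ℝ) - A.card)^2 ≤ ((n:ℝ)/2 - A.card)^2 :=
        pow_le_pow_left₀ h1 h2 2
      have h4 : ((n:ℝ)/2 - A.card)^2 = (2 * (A.card:ℝ) - n)^2/4 := by ring
      linarith
    calc ∑ A ∈ F, ((k₀:ℝ) - A.card)^2 ≤ ∑ A ∈ F, (2 * (A.card:ℝ) - n)^2 / 4 :=
          Finset.sum_le_sum step1
      _ = (∑ A ∈ F, (2 * (A.card:ℝ) - n)^2) / 4 := by rw [Finset.sum_div]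
      _ ≤ ((n:ℝ) * 2^n / 2) / 4 := by
          have := sum_sq_Fam (n := n); rw [← hFdef] at this; linarith
      _ = (n:ℝ) * 2^n / 8 := by ring
  -- second moment about c
  set T := ∑ A ∈ F, (X A - c)^2 with hT
  have hTbound : T ≤ B^2 * ((n:ℝ) * 2^n / 8) := by
    calc T ≤ ∑ A ∈ F, ((k₀:ℝ) - A.card)^2 * B^2 := Finset.sum_le_sum hpoint
      _ = (∑ A ∈ F, ((k₀:ℝ) - A.card)^2) * B^2 := by rw [← Finset.sum_mul]
      _ ≤ ((n:ℝ) * 2^n / 8) * B^2 := by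
          apply mul_le_mul_of_nonneg_right hquad (by positivity)
      _ = B^2 * ((n:ℝ) * 2^n / 8) := by ring
  set S1 := ∑ A ∈ F, X A with hS1
  set S2 := ∑ A ∈ F, (X A)^2 with hS2
  have hTexp : T = S2 - 2*c*S1 + N * c^2 := by
    rw [hT, hS2, hS1]
    have : ∀ A ∈ F, (X A - c)^2 = (X A)^2 - 2*c*(X A) + c^2 := fun A _ => by ring
    rw [Finset.sum_congr rfl this, Finset.sum_add_distrib, Finset.sum_sub_distrib,
      ← Finset.mul_sum, Finset.sum_const, nsmul_eq_mul, hN]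
  -- variance ≤ second moment
  have hvar : S2 / N - (S1 / N)^2 ≤ T / N := by
    have hTN : T / N = S2 / N - 2*c*(S1/N) + c^2 := by
      rw [hTexp]; field_simp
    nlinarith [sq_nonneg (S1/N - c)]
  -- final chain
  have hchain : T / N ≤ B^2 * (n:ℝ) / 4 := by
    have h2n : (0:ℝ) < (2:ℝ)^n / 2 := by positivity
    calc T / N ≤ (B^2 * ((n:ℝ) * 2^n / 8)) / ((2:ℝ)^n / 2) := by
          apply div_le_div₀ (by positivity) hTbound h2n hNge
      _ = B^2 * (n:ℝ) / 4 := by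
          have : (2:ℝ)^n ≠ 0 := by positivity
          field_simp
          ring
  -- compute the final constant
  have hfinal : B^2 * (n:ℝ) / 4 ≤
      (1 + ε) * (n : ℝ) ^ (2 * (m'+1) - 1) / (2 ^ (2 * (m'+1)) * (((m'+1) - 1).factorial : ℝ) ^ 2) := by
    simp only [show 2 * (m'+1) - 1 = 2*m'+1 by omega, show (m'+1) - 1 = m' by omega,
      show 2 * (m'+1) = 2*m'+2 by omega]
    have hfac : (0:ℝ) < (m'.factorial : ℝ) := by exact_mod_cast m'.factorial_pos
    have heq : B^2 * (n:ℝ) / 4 = (n:ℝ)^(2*m'+1) / (2^(2*m'+2) * (m'.factorial : ℝ)^2) := by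
      rw [hB]
      field_simp
      have h2 : ((1:ℝ)/2)^(m'*2) * 2^(m'*2) = 1 := by rw [← mul_pow]; norm_num
      linear_combination ((n:ℝ) * (n:ℝ) ^ (m' * 2) * 4) * h2
    rw [heq, mul_div_assoc]
    have hnum : (0:ℝ) ≤ (n:ℝ)^(2*m'+1) := by positivity
    have hden : (0:ℝ) < 2^(2*m'+2) * (m'.factorial : ℝ)^2 := by positivity
    exact le_mul_of_one_le_left (div_nonneg hnum hden.le) (by linarith)
  calc S2 / N - (S1 / N)^2 ≤ T / N := hvar
    _ ≤ B^2 * (n:ℝ) / 4 := hchain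
    _ ≤ _ := hfinal
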